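/- Let σ₀ > 0, let G be the density of N(0, σ₀²) on ℝ, let U be the uniform density on [0, 2π], and for n ∈ ℕ let f_n(x) = (1 + sin(nx))/(2π) on [0, 2π] (zero elsewhere). Then lim_{n→∞} TV(f_n * G, U * G) = 0; equivalently, lim_{n→∞} ∫_ℝ | ((sin(n·)·1_{[0,2π]}) * G)(x) | dx = 0. -/

import Mathlib

open MeasureTheory Real Filter

/-- One-dimensional convolution. -/
noncomputable def conv1 (f g : ℝ → ℝ) (x : ℝ) : ℝ := ∫ u, f u * g (x - u)

/-- Density of `N(0, σ₀²)` on `ℝ`. -/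
noncomputable def gaussPdf1 (σ₀ : ℝ) (u : ℝ) : ℝ :=
  (Real.sqrt (2 * π * σ₀ ^ 2))⁻¹ * Real.exp (-u ^ 2 / (2 * σ₀ ^ 2))

/-- `f_n(x) = (1 + sin(nx))/(2π)` on `[0, 2π]`, zero elsewhere. -/
noncomputable def pf (n : ℕ) (x : ℝ) : ℝ :=
  Set.indicator (Set.Icc 0 (2 * π)) (fun y => (1 + Real.sin (n * y)) / (2 * π)) x

/-- The uniform density on `[0, 2π]`. -/
noncomputable def unifPdf (x : ℝ) : ℝ :=
  Set.indicator (Set.Icc 0 (2 * π)) (fun _ => 1 / (2 * π)) x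

/-- Derivative of the Gaussian density. -/
noncomputable def gDeriv (σ₀ : ℝ) (v : ℝ) : ℝ := (-v / σ₀ ^ 2) * gaussPdf1 σ₀ v

lemma gaussPdf1_hasDerivAt (σ₀ : ℝ) (hσ₀ : 0 < σ₀) (v : ℝ) :
    HasDerivAt (gaussPdf1 σ₀) (gDeriv σ₀ v) v := by
  have h1 : HasDerivAt (fun u : ℝ => -u ^ 2 / (2 * σ₀ ^ 2)) (-(2 * v ^ 1) / (2 * σ₀ ^ 2)) v :=
    (hasDerivAt_pow 2 v).neg.div_const (2 * σ₀ ^ 2)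
  have h2 := (h1.exp.const_mul ((Real.sqrt (2 * π * σ₀ ^ 2))⁻¹))
  refine h2.congr_deriv ?_
  unfold gDeriv gaussPdf1
  have hσ : σ₀ ^ 2 ≠ 0 := by positivity
  field_simp

lemma gaussPdf1_continuous (σ₀ : ℝ) : Continuous (gaussPdf1 σ₀) := by
  unfold gaussPdf1; fun_prop

lemma gDeriv_continuous (σ₀ : ℝ) : Continuous (gDeriv σ₀) := by
  unfold gDeriv gaussPdf1; fun_prop

lemma exp_eq_aux (σ₀ u : ℝ) : -u ^ 2 / (2 * σ₀ ^ 2) = -(2 * σ₀ ^ 2)⁻¹ * u ^ 2 := by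
  ring

lemma gaussPdf1_integrable (σ₀ : ℝ) (hσ₀ : 0 < σ₀) : Integrable (gaussPdf1 σ₀) := by
  have hb : (0:ℝ) < (2 * σ₀ ^ 2)⁻¹ := by positivity
  have := (integrable_exp_neg_mul_sq hb).const_mul ((Real.sqrt (2 * π * σ₀ ^ 2))⁻¹)
  exact this.congr (Filter.Eventually.of_forall fun u => by
    simp only [gaussPdf1, exp_eq_aux])

lemma gDeriv_integrable (σ₀ : ℝ) (hσ₀ : 0 < σ₀) : Integrable (gDeriv σ₀) := by
  have hb : (0:ℝ) < (2 * σ₀ ^ 2)⁻¹ := by positivity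
  have h1 : Integrable (fun x : ℝ => x * Real.exp (-(2 * σ₀ ^ 2)⁻¹ * x ^ 2)) := by
    have := integrable_rpow_mul_exp_neg_mul_sq hb (s := 1) (by norm_num)
    simpa using this
  have h2 := h1.const_mul (-(Real.sqrt (2 * π * σ₀ ^ 2))⁻¹ / σ₀ ^ 2)
  refine h2.congr (Filter.Eventually.of_forall fun v => ?_)
  simp only [gDeriv, gaussPdf1, exp_eq_aux]
  ring

/-- Rewriting an indicator-times-translate integral as an interval integral. -/
lemma indicator_conv (h : ℝ → ℝ) (ψ : ℝ → ℝ) (x : ℝ) :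
    ∫ u, Set.indicator (Set.Icc 0 (2 * π)) h u * ψ (x - u)
      = ∫ t in (0:ℝ)..(2 * π), h t * ψ (x - t) := by
  have h0 : (0:ℝ) ≤ 2 * π := by positivity
  have heq : (fun u => Set.indicator (Set.Icc 0 (2 * π)) h u * ψ (x - u))
      = Set.indicator (Set.Icc 0 (2 * π)) (fun u => h u * ψ (x - u)) := by
    funext u
    by_cases hu : u ∈ Set.Icc (0:ℝ) (2 * π) <;> simp [Set.indicator_apply, hu]
  rw [heq, integral_indicator measurableSet_Icc, integral_Icc_eq_integral_Ioc,
    ← intervalIntegral.integral_of_le h0]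

lemma conv_diff_eq (σ₀ : ℝ) (hσ₀ : 0 < σ₀) (n : ℕ) (hn : 1 ≤ n) (x : ℝ) :
    conv1 (pf n) (gaussPdf1 σ₀) x - conv1 unifPdf (gaussPdf1 σ₀) x
      = (2 * π)⁻¹ * ∫ t in (0:ℝ)..(2 * π), ((1 - Real.cos (n * t)) / n) * gDeriv σ₀ (x - t) := by
  have hn' : (n:ℝ) ≠ 0 := Nat.cast_ne_zero.mpr (by omega)
  have hG := gaussPdf1_continuous σ₀
  have hGx : Continuous (fun t : ℝ => gaussPdf1 σ₀ (x - t)) :=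
    hG.comp (continuous_const.sub continuous_id)
  have hGd : Continuous (fun t : ℝ => gDeriv σ₀ (x - t)) :=
    (gDeriv_continuous σ₀).comp (continuous_const.sub continuous_id)
  have e1 : conv1 (pf n) (gaussPdf1 σ₀) x
      = ∫ t in (0:ℝ)..(2 * π), ((1 + Real.sin (n * t)) / (2 * π)) * gaussPdf1 σ₀ (x - t) := by
    unfold conv1 pf
    exact indicator_conv _ _ x
  have e2 : conv1 unifPdf (gaussPdf1 σ₀) x
      = ∫ t in (0:ℝ)..(2 * π), (1 / (2 * π)) * gaussPdf1 σ₀ (x - t) := by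
    unfold conv1 unifPdf
    exact indicator_conv _ _ x
  have hi1 : IntervalIntegrable
      (fun t => ((1 + Real.sin (n * t)) / (2 * π)) * gaussPdf1 σ₀ (x - t)) volume 0 (2 * π) := by
    apply Continuous.intervalIntegrable; fun_prop
  have hi2 : IntervalIntegrable
      (fun t => (1 / (2 * π)) * gaussPdf1 σ₀ (x - t)) volume 0 (2 * π) := by
    apply Continuous.intervalIntegrable; fun_prop
  rw [e1, e2, ← intervalIntegral.integral_sub hi1 hi2]
  have e3 : ∀ t : ℝ, ((1 + Real.sin (n * t)) / (2 * π)) * gaussPdf1 σ₀ (x - t)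
      - (1 / (2 * π)) * gaussPdf1 σ₀ (x - t)
      = (2 * π)⁻¹ * (Real.sin (n * t) * gaussPdf1 σ₀ (x - t)) := by
    intro t; field_simp; ring
  rw [intervalIntegral.integral_congr (fun t _ => e3 t), intervalIntegral.integral_const_mul]
  congr 1
  -- integration by parts
  have hu : ∀ t ∈ Set.uIcc (0:ℝ) (2 * π),
      HasDerivAt (fun t => (1 - Real.cos (n * t)) / n) (Real.sin (n * t)) t := by
    intro t _
    have hc : HasDerivAt (fun t : ℝ => Real.cos ((n:ℝ) * t)) (-Real.sin ((n:ℝ) * t) * n) t := by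
      exact HasDerivAt.congr_deriv ((Real.hasDerivAt_cos ((n:ℝ) * t)).comp t ((hasDerivAt_id t).const_mul (n:ℝ))) (by simp)
    have := ((hasDerivAt_const t (1:ℝ)).sub hc).div_const (n:ℝ)
    refine this.congr_deriv ?_
    field_simp
    ring
  have hv : ∀ t ∈ Set.uIcc (0:ℝ) (2 * π),
      HasDerivAt (fun t => gaussPdf1 σ₀ (x - t)) (-gDeriv σ₀ (x - t)) t := by
    intro t _
    have := (gaussPdf1_hasDerivAt σ₀ hσ₀ (x - t)).comp t ((hasDerivAt_id t).const_sub x)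
    exact HasDerivAt.congr_deriv this (by simp)
  have hu' : IntervalIntegrable (fun t => Real.sin ((n:ℝ) * t)) volume 0 (2 * π) := by
    apply Continuous.intervalIntegrable; fun_prop
  have hv' : IntervalIntegrable (fun t => -gDeriv σ₀ (x - t)) volume 0 (2 * π) :=
    hGd.neg.intervalIntegrable _ _
  have hibp := intervalIntegral.integral_mul_deriv_eq_deriv_mul hu hv hu' hv'
  have hb2 : (1 - Real.cos ((n:ℝ) * (2 * π))) / n = 0 := by
    rw [Real.cos_nat_mul_two_pi]; simp
  have hb0 : (1 - Real.cos ((n:ℝ) * 0)) / n = 0 := by simp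
  rw [hb2, hb0] at hibp
  simp only [zero_mul, sub_zero, zero_sub] at hibp
  -- hibp : ∫ (1-cos(nt))/n * (-gDeriv(x-t)) = - ∫ sin(nt) * gaussPdf1(x-t)
  have : ∫ t in (0:ℝ)..(2 * π), ((1 - Real.cos (n * t)) / n) * (-gDeriv σ₀ (x - t))
      = - ∫ t in (0:ℝ)..(2 * π), ((1 - Real.cos (n * t)) / n) * gDeriv σ₀ (x - t) := by
    rw [← intervalIntegral.integral_neg]
    apply intervalIntegral.integral_congr
    intro t _; ring
  rw [this] at hibp
  linarith [hibp]

/-- After smoothing by a Gaussian of any positive variance, the sequence `f_n`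
converges in total variation to the uniform density: `TV(f_n * G, U * G) → 0`. -/
theorem sine_family_smoothed_tv_to_zero (σ₀ : ℝ) (hσ₀ : 0 < σ₀) :
    Tendsto (fun n : ℕ =>
        (1 / 2) * ∫ x, |conv1 (pf n) (gaussPdf1 σ₀) x - conv1 unifPdf (gaussPdf1 σ₀) x|)
      atTop (nhds 0) := by
  have hπ : (0:ℝ) < π := pi_pos
  have h2π : (0:ℝ) < 2 * π := by positivity
  set ψ : ℝ → ℝ := fun v => |gDeriv σ₀ v| with hψdef
  set φ : ℝ → ℝ := Set.indicator (Set.Icc 0 (2 * π)) (fun _ => (1:ℝ)) with hφdef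
  have hψ : Integrable ψ := (gDeriv_integrable σ₀ hσ₀).abs
  have hφ : Integrable φ := by
    rw [hφdef, integrable_indicator_iff measurableSet_Icc]
    exact integrableOn_const measure_Icc_lt_top.ne
  set C : ℝ := ∫ v, ψ v with hCdef
  have hC0 : 0 ≤ C := integral_nonneg fun v => abs_nonneg _
  set W : ℝ → ℝ := MeasureTheory.convolution φ ψ (ContinuousLinearMap.lsmul ℝ ℝ) volume
    with hWdef
  have hW_int : Integrable W := hφ.integrable_convolution _ hψ
  have hW_eq : ∀ x, W x = ∫ t in (0:ℝ)..(2 * π), |gDeriv σ₀ (x - t)| := by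
    intro x
    rw [hWdef, MeasureTheory.convolution_def]
    simp only [ContinuousLinearMap.lsmul_apply, smul_eq_mul]
    rw [hφdef]
    have := indicator_conv (fun _ => (1:ℝ)) ψ x
    rw [this]
    simp [hψdef]
  have hW_nonneg : ∀ x, 0 ≤ W x := by
    intro x
    rw [hW_eq x]
    apply intervalIntegral.integral_nonneg h2π.le
    intro t _; exact abs_nonneg _
  have hW_val : ∫ x, W x = (2 * π) * C := by
    rw [hWdef, integral_convolution _ hφ hψ]
    simp only [ContinuousLinearMap.lsmul_apply, smul_eq_mul]
    congr 1
    rw [hφdef, MeasureTheory.integral_indicator_const _ measurableSet_Icc]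
    simp [Real.volume_Icc, ENNReal.toReal_ofReal h2π.le, hπ.le]
  -- key bound for n ≥ 1
  have key : ∀ n : ℕ, 1 ≤ n →
      (∫ x, |conv1 (pf n) (gaussPdf1 σ₀) x - conv1 unifPdf (gaussPdf1 σ₀) x|) ≤ (2 / n) * C := by
    intro n hn
    have hn0 : (0:ℝ) < n := by exact_mod_cast hn
    have hptw : ∀ x, |conv1 (pf n) (gaussPdf1 σ₀) x - conv1 unifPdf (gaussPdf1 σ₀) x|
        ≤ (2 * π)⁻¹ * (2 / n) * W x := by
      intro x
      rw [conv_diff_eq σ₀ hσ₀ n hn x, abs_mul, abs_of_nonneg (by positivity : (0:ℝ) ≤ (2*π)⁻¹)]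
      rw [hW_eq x, mul_assoc]
      apply mul_le_mul_of_nonneg_left _ (by positivity : (0:ℝ) ≤ (2*π)⁻¹)
      calc |∫ t in (0:ℝ)..(2 * π), ((1 - Real.cos (n * t)) / n) * gDeriv σ₀ (x - t)|
          ≤ ∫ t in (0:ℝ)..(2 * π), |((1 - Real.cos (n * t)) / n) * gDeriv σ₀ (x - t)| :=
            intervalIntegral.abs_integral_le_integral_abs h2π.le
        _ ≤ ∫ t in (0:ℝ)..(2 * π), (2 / n) * |gDeriv σ₀ (x - t)| := by
            apply intervalIntegral.integral_mono_on h2π.le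
            · apply Continuous.intervalIntegrable
              apply Continuous.abs
              apply Continuous.mul
              · fun_prop
              · exact (gDeriv_continuous σ₀).comp (continuous_const.sub continuous_id)
            · apply Continuous.intervalIntegrable
              apply Continuous.mul continuous_const
              exact ((gDeriv_continuous σ₀).comp (continuous_const.sub continuous_id)).abs
            · intro t _
              rw [abs_mul]
              apply mul_le_mul_of_nonneg_right _ (abs_nonneg _)
              rw [abs_div, abs_of_pos hn0, div_le_div_iff_of_pos_right hn0]
              have h1 := Real.neg_one_le_cos ((n:ℝ) * t)
              have h2 := Real.cos_le_one ((n:ℝ) * t)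
              rw [abs_le]; constructor <;> linarith
        _ = (2 / n) * ∫ t in (0:ℝ)..(2 * π), |gDeriv σ₀ (x - t)| :=
            intervalIntegral.integral_const_mul _ _
    calc (∫ x, |conv1 (pf n) (gaussPdf1 σ₀) x - conv1 unifPdf (gaussPdf1 σ₀) x|)
        ≤ ∫ x, (2 * π)⁻¹ * (2 / n) * W x := by
          apply integral_mono_of_nonneg (Filter.Eventually.of_forall fun x => abs_nonneg _)
            ((hW_int.const_mul _))
          exact Filter.Eventually.of_forall hptw
      _ = (2 * π)⁻¹ * (2 / n) * ((2 * π) * C) := by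
          rw [integral_const_mul, hW_val]
      _ = (2 / n) * C := by field_simp
  -- squeeze
  have hub : ∀ᶠ n : ℕ in atTop,
      (1 / 2) * (∫ x, |conv1 (pf n) (gaussPdf1 σ₀) x - conv1 unifPdf (gaussPdf1 σ₀) x|)
        ≤ C / n := by
    filter_upwards [eventually_ge_atTop 1] with n hn
    have := key n hn
    have : (1:ℝ)/2 * (∫ x, |conv1 (pf n) (gaussPdf1 σ₀) x - conv1 unifPdf (gaussPdf1 σ₀) x|)
        ≤ (1/2) * ((2 / n) * C) := by linarith
    calc (1:ℝ)/2 * (∫ x, |conv1 (pf n) (gaussPdf1 σ₀) x - conv1 unifPdf (gaussPdf1 σ₀) x|)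
        ≤ (1/2) * ((2 / n) * C) := this
      _ = C / n := by ring
  have hlb : ∀ᶠ n : ℕ in atTop, (0:ℝ) ≤
      (1 / 2) * (∫ x, |conv1 (pf n) (gaussPdf1 σ₀) x - conv1 unifPdf (gaussPdf1 σ₀) x|) := by
    apply Filter.Eventually.of_forall
    intro n
    have : (0:ℝ) ≤ ∫ x, |conv1 (pf n) (gaussPdf1 σ₀) x - conv1 unifPdf (gaussPdf1 σ₀) x| :=
      integral_nonneg fun x => abs_nonneg _
    linarith
  exact tendsto_of_tendsto_of_tendsto_of_le_of_le' tendsto_const_nhds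
    (tendsto_const_div_atTop_nhds_zero_nat C) hlb hub
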